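/- Let y : [0,T] → ℝ be continuous with y(t) > 1 for all t, y(0) = y₀, and suppose y(t) ≤ y₀ + C·∫₀ᵗ y(s)·log y(s) ds for all t ∈ [0,T], where C > 0. Then y(t) ≤ exp(e^{Ct}·log y₀) for all t ∈ [0,T]. -/

import Mathlib

open Set Real intervalIntegral MeasureTheory Topology Filter

theorem log_gronwall (T C y₀ : ℝ) (hT : 0 ≤ T) (hC : 0 < C) (y : ℝ → ℝ)
    (hcont : ContinuousOn y (Set.Icc 0 T))
    (hy1 : ∀ t ∈ Set.Icc (0:ℝ) T, 1 < y t)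
    (hy0 : y 0 = y₀)
    (hineq : ∀ t ∈ Set.Icc (0:ℝ) T,
      y t ≤ y₀ + C * ∫ s in (0:ℝ)..t, y s * Real.log (y s)) :
    ∀ t ∈ Set.Icc (0:ℝ) T, y t ≤ Real.exp (Real.exp (C * t) * Real.log y₀) := by
  set g : ℝ → ℝ := fun s => y s * Real.log (y s) with hg_def
  have hgcont : ContinuousOn g (Set.Icc 0 T) :=
    hcont.mul (hcont.log (fun t ht => by have := hy1 t ht; linarith))
  set u : ℝ → ℝ := fun t => y₀ + C * ∫ s in (0:ℝ)..t, g s with hu_def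
  have hyu : ∀ t ∈ Set.Icc (0:ℝ) T, y t ≤ u t := fun t ht => hineq t ht
  have hu1 : ∀ t ∈ Set.Icc (0:ℝ) T, 1 < u t := fun t ht =>
    lt_of_lt_of_le (hy1 t ht) (hyu t ht)
  have hupos : ∀ t ∈ Set.Icc (0:ℝ) T, 0 < u t := fun t ht =>
    lt_trans one_pos (hu1 t ht)
  -- continuity of u
  have hucont : ContinuousOn u (Set.Icc 0 T) := by
    have hint : IntegrableOn g (Set.uIcc 0 T) := by
      rw [Set.uIcc_of_le hT]
      exact hgcont.integrableOn_compact isCompact_Icc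
    have h2 : ContinuousOn (fun t => ∫ s in (0:ℝ)..t, g s) (Set.Icc 0 T) := by
      have := intervalIntegral.continuousOn_primitive_interval (f := g) (a := 0) (b := T) hint
      rwa [Set.uIcc_of_le hT] at this
    exact continuousOn_const.add (continuousOn_const.mul h2)
  set v : ℝ → ℝ := fun t => Real.log (u t) with hv_def
  have hvcont : ContinuousOn v (Set.Icc 0 T) :=
    hucont.log (fun t ht => (hupos t ht).ne')
  -- derivative of v within Ici t
  have hv' : ∀ t ∈ Set.Ico (0:ℝ) T,
      HasDerivWithinAt v (C * g t / u t) (Set.Ici t) t := by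
    intro t ht
    have htT : t < T := ht.2
    have htmem : t ∈ Set.Icc (0:ℝ) T := ⟨ht.1, le_of_lt htT⟩
    have hfilter : 𝓝[Set.Icc t T] t = 𝓝[Set.Ici t] t :=
      nhdsWithin_Icc_eq_nhdsGE htT
    have hIccmem : Set.Icc t T ∈ 𝓝[Set.Ici t] t := by
      rw [← hfilter]; exact self_mem_nhdsWithin
    have hii : IntervalIntegrable g MeasureTheory.volume 0 t := by
      apply ContinuousOn.intervalIntegrable
      rw [Set.uIcc_of_le ht.1]
      exact hgcont.mono (Set.Icc_subset_Icc_right (le_of_lt htT))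
    have hmeas : StronglyMeasurableAtFilter g (𝓝[Set.Ioi t] t) MeasureTheory.volume := by
      refine ⟨Set.Icc t T, nhdsWithin_mono t Set.Ioi_subset_Ici_self hIccmem, ?_⟩
      exact (hgcont.mono (Set.Icc_subset_Icc ht.1 le_rfl)).aestronglyMeasurable
        measurableSet_Icc
    have hcw : ContinuousWithinAt g (Set.Ioi t) t := by
      apply ContinuousWithinAt.mono (t := Set.Ici t) ?_ Set.Ioi_subset_Ici_self
      have h1 : ContinuousWithinAt g (Set.Icc t T) t :=
        (hgcont t htmem).mono (Set.Icc_subset_Icc ht.1 le_rfl)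
      rwa [ContinuousWithinAt, hfilter] at h1
    have hderiv : HasDerivWithinAt (fun z => ∫ s in (0:ℝ)..z, g s) (g t) (Set.Ici t) t :=
      intervalIntegral.integral_hasDerivWithinAt_right hii hmeas hcw
    have hu' : HasDerivWithinAt u (C * g t) (Set.Ici t) t := by
      simpa [hu_def] using (hderiv.const_mul C).const_add y₀
    have := hu'.log (hupos t htmem).ne'
    simpa [hv_def] using this
  -- bound on derivative
  have hbound : ∀ t ∈ Set.Ico (0:ℝ) T, C * g t / u t ≤ C * v t + 0 := by
    intro t ht
    have htmem : t ∈ Set.Icc (0:ℝ) T := ⟨ht.1, le_of_lt ht.2⟩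
    have hy := hy1 t htmem
    have hu := hu1 t htmem
    have hyu' := hyu t htmem
    have hlog : Real.log (y t) ≤ Real.log (u t) :=
      Real.log_le_log (by linarith) hyu'
    have hlogy : 0 ≤ Real.log (y t) := Real.log_nonneg (le_of_lt hy)
    have hg_le : g t ≤ u t * Real.log (u t) :=
      mul_le_mul hyu' hlog hlogy (by linarith)
    rw [add_zero, div_le_iff₀ (by linarith : (0:ℝ) < u t)]
    calc C * g t ≤ C * (u t * Real.log (u t)) := by
          exact mul_le_mul_of_nonneg_left hg_le (le_of_lt hC)
      _ = C * v t * u t := by ring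
  -- Gronwall
  have hv0 : v 0 ≤ Real.log y₀ := by
    simp [hv_def, hu_def, intervalIntegral.integral_same]
  have hgron := le_gronwallBound_of_liminf_deriv_right_le (f := v)
    (f' := fun t => C * g t / u t) (δ := Real.log y₀) (K := C) (ε := 0) (a := 0) (b := T)
    hvcont (fun x hx r hr => (hv' x hx).liminf_right_slope_le hr) hv0 hbound
  intro t ht
  have hvt := hgron t ht
  rw [gronwallBound_ε0, sub_zero] at hvt
  have hut : u t = Real.exp (v t) := (Real.exp_log (hupos t ht)).symm
  calc y t ≤ u t := hyu t ht
    _ = Real.exp (v t) := hut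
    _ ≤ Real.exp (Real.exp (C * t) * Real.log y₀) := by
        apply Real.exp_le_exp.2
        linarith [hvt, mul_comm (Real.log y₀) (Real.exp (C * t))]
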